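/- (Index formula from the proof of Theorem 1.) Assume W_m(n) ≠ 0 for every n ∈ ℕ₀ with n ≥ −m. Then the kernel of P(∂_z) on ℂ[[z]] has ℂ-dimension max(−m, 0), the cokernel ℂ[[z]]/im(P(∂_z)) has ℂ-dimension max(m, 0), and consequently the index χ(P(∂_z), ℂ[[z]]) := dim ker(P(∂_z)) − dim coker(P(∂_z)) equals −m. -/

import Mathlib

open PowerSeries

/-- Formal differentiation `∂_z` on `ℂ[[z]]` as a `ℂ`-linear map. -/
noncomputable def dz : PowerSeries ℂ →ₗ[ℂ] PowerSeries ℂ where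
  toFun u := PowerSeries.mk fun n => ((n : ℂ) + 1) * PowerSeries.coeff (n + 1) u
  map_add' u v := by
    ext n
    simp [mul_add]
  map_smul' c u := by
    ext n
    simp
    ring

/-- The order of vanishing at `0` of a formal power series. -/
noncomputable def ordz (g : PowerSeries ℂ) : ℕ := sInf {k : ℕ | PowerSeries.coeff k g ≠ 0}

/-- The operator `P(∂_z) u = Σ_{j∈Λ} a_j · ∂_z^j u`. -/
noncomputable def Pop (Λ : Finset ℕ) (a : ℕ → PowerSeries ℂ) :
    PowerSeries ℂ →ₗ[ℂ] PowerSeries ℂ :=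
  ∑ j ∈ Λ, (LinearMap.mulLeft ℂ (a j)).comp (dz ^ j)

/-- The characteristic polynomial `W_q` evaluated at a natural number `n`:
`W_q(n) = Σ_{j∈Λ, α_j−j=q} a_{j,j+q} · n(n−1)⋯(n−j+1)`. -/
noncomputable def W (Λ : Finset ℕ) (a : ℕ → PowerSeries ℂ) (q : ℤ) (n : ℕ) : ℂ :=
  ∑ j ∈ Λ.filter (fun j => (ordz (a j) : ℤ) - j = q),
    PowerSeries.coeff (ordz (a j)) (a j) * (n.descFactorial j : ℂ)

open Finset

lemma coeff_ordz_ne {g : PowerSeries ℂ} (hg : g ≠ 0) : PowerSeries.coeff (ordz g) g ≠ 0 := by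
  have : {k : ℕ | PowerSeries.coeff k g ≠ 0}.Nonempty := by
    by_contra h
    apply hg
    ext k
    simpa using fun hk => h ⟨k, hk⟩
  exact Nat.sInf_mem this

lemma coeff_eq_zero_of_lt_ordz {g : PowerSeries ℂ} {k : ℕ} (hk : k < ordz g) :
    PowerSeries.coeff k g = 0 := by
  by_contra h
  exact absurd (Nat.sInf_le h) (not_le.mpr hk)

lemma coeff_dz_pow (j : ℕ) (u : PowerSeries ℂ) (k : ℕ) :
    PowerSeries.coeff k ((dz ^ j) u) =
      ((k + j).descFactorial j : ℂ) * PowerSeries.coeff (k + j) u := by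
  induction j generalizing u with
  | zero => simp
  | succ j ih =>
    have : (dz ^ (j + 1)) u = (dz ^ j) (dz u) := by
      rw [pow_succ, Module.End.mul_apply]
    rw [this, ih, show dz u = PowerSeries.mk fun n => ((n : ℂ) + 1) * PowerSeries.coeff (n + 1) u from rfl]
    rw [PowerSeries.coeff_mk]
    rw [show k + (j + 1) = (k+j) + 1 from by omega, Nat.succ_descFactorial_succ]
    push_cast
    ring


noncomputable def solve (g : ℕ → (ℕ → ℂ) → ℂ) : ℕ → ℂ
  | n => g n (fun k => if h : k < n then solve g k else 0)
termination_by n => n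
decreasing_by exact h

lemma solve_eq (g : ℕ → (ℕ → ℂ) → ℂ) (n : ℕ) :
    solve g n = g n (fun k => if h : k < n then solve g k else 0) := by
  rw [solve]


noncomputable def cmat (Λ : Finset ℕ) (a : ℕ → PowerSeries ℂ) (t n' : ℕ) : ℂ :=
  ∑ j ∈ Λ.filter (fun j => j ≤ n' ∧ n' - j ≤ t),
    PowerSeries.coeff (t + j - n') (a j) * (n'.descFactorial j : ℂ)

lemma coeff_Pop (Λ : Finset ℕ) (a : ℕ → PowerSeries ℂ) (u : PowerSeries ℂ) (t : ℕ) :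
    PowerSeries.coeff t (Pop Λ a u) =
      ∑ j ∈ Λ, ∑ p ∈ antidiagonal t,
        PowerSeries.coeff p.1 (a j) *
          (((p.2 + j).descFactorial j : ℂ) * PowerSeries.coeff (p.2 + j) u) := by
  rw [Pop, LinearMap.sum_apply, map_sum]
  refine Finset.sum_congr rfl fun j hj => ?_
  rw [LinearMap.comp_apply, LinearMap.mulLeft_apply, PowerSeries.coeff_mul]
  exact Finset.sum_congr rfl fun p hp => by rw [coeff_dz_pow]

-- small coefficients vanish
lemma coeff_Pop_small (Λ : Finset ℕ) (a : ℕ → PowerSeries ℂ) (m : ℤ)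
    (hα : ∀ j ∈ Λ, m ≤ (ordz (a j) : ℤ) - j) (u : PowerSeries ℂ) (t : ℕ)
    (ht : (t : ℤ) < m) : PowerSeries.coeff t (Pop Λ a u) = 0 := by
  rw [coeff_Pop]
  refine Finset.sum_eq_zero fun j hj => Finset.sum_eq_zero fun p hp => ?_
  have hp' := Finset.HasAntidiagonal.mem_antidiagonal.mp hp
  have h1 : p.1 < ordz (a j) := by
    have := hα j hj
    omega
  rw [coeff_eq_zero_of_lt_ordz h1, zero_mul]

-- key formula
lemma coeff_Pop_key (Λ : Finset ℕ) (a : ℕ → PowerSeries ℂ) (m : ℤ)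
    (hα : ∀ j ∈ Λ, m ≤ (ordz (a j) : ℤ) - j) (u : PowerSeries ℂ) (t n : ℕ)
    (htn : (t : ℤ) = n + m) :
    PowerSeries.coeff t (Pop Λ a u) =
      ∑ n' ∈ Finset.range (n + 1), cmat Λ a t n' * PowerSeries.coeff n' u := by
  rw [coeff_Pop]
  have step : ∀ j ∈ Λ,
      (∑ p ∈ antidiagonal t, PowerSeries.coeff p.1 (a j) *
        (((p.2 + j).descFactorial j : ℂ) * PowerSeries.coeff (p.2 + j) u)) =
      ∑ n' ∈ Finset.range (n + 1),
        (if j ≤ n' ∧ n' - j ≤ t then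
          PowerSeries.coeff (t + j - n') (a j) * ((n'.descFactorial j : ℂ) *
            PowerSeries.coeff n' u) else 0) := by
    intro j hj
    -- step 1: antidiagonal → Icc j (t+j)
    rw [Finset.sum_nbij' (i := fun p => p.2 + j) (j := fun n' => (t + j - n', n' - j))
      (g := fun n' => PowerSeries.coeff (t + j - n') (a j) *
            ((n'.descFactorial j : ℂ) * PowerSeries.coeff n' u))
      (s := antidiagonal t) (t := Finset.Icc j (t + j))]
    · -- step 2: Icc → range (n+1) with ite
      rw [← Finset.sum_filter]
      have hsub : Finset.filter (fun n' => j ≤ n' ∧ n' - j ≤ t) (Finset.range (n + 1))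
          ⊆ Finset.Icc j (t + j) := by
        intro x hx
        simp only [Finset.mem_filter, Finset.mem_range] at hx
        simp only [Finset.mem_Icc]
        omega
      refine (Finset.sum_subset hsub fun x hx hx' => ?_).symm
      simp only [Finset.mem_Icc] at hx
      simp only [Finset.mem_filter, Finset.mem_range, not_and, not_le] at hx'
      have hxn : n < x := by omega
      have : t + j - x < ordz (a j) := by
        have := hα j hj
        omega
      rw [coeff_eq_zero_of_lt_ordz this, zero_mul]
    · intro p hp; have := Finset.HasAntidiagonal.mem_antidiagonal.mp hp
      simp only [Finset.mem_Icc]; omega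
    · intro x hx; simp only [Finset.mem_Icc] at hx
      rw [Finset.HasAntidiagonal.mem_antidiagonal]; omega
    · intro p hp; have := Finset.HasAntidiagonal.mem_antidiagonal.mp hp
      ext <;> simp <;> omega
    · intro x hx; simp only [Finset.mem_Icc] at hx; omega
    · intro p hp; have := Finset.HasAntidiagonal.mem_antidiagonal.mp hp
      have h1 : p.1 = t + j - (p.2 + j) := by omega
      rw [← h1]
  rw [Finset.sum_congr rfl step, Finset.sum_comm]
  refine Finset.sum_congr rfl fun n' hn' => ?_
  rw [← Finset.sum_filter, cmat, Finset.sum_mul]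
  exact Finset.sum_congr rfl fun j hj => by ring

lemma cmat_diag (Λ : Finset ℕ) (a : ℕ → PowerSeries ℂ) (m : ℤ)
    (hα : ∀ j ∈ Λ, m ≤ (ordz (a j) : ℤ) - j) (t n : ℕ) (htn : (t : ℤ) = n + m) :
    cmat Λ a t n = W Λ a m n := by
  rw [cmat, W, Finset.sum_filter, Finset.sum_filter]
  refine Finset.sum_congr rfl fun j hj => ?_
  have hαj := hα j hj
  split_ifs with h1 h2 h2
  · -- both: t + j - n = ordz (a j)
    have : t + j - n = ordz (a j) := by omega
    rw [this]
  · -- c1 true, c2 false: coeff vanishes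
    have : t + j - n < ordz (a j) := by omega
    rw [coeff_eq_zero_of_lt_ordz this, zero_mul]
  · -- c1 false, c2 true
    by_cases hjn : j ≤ n
    · exfalso; omega
    · rw [Nat.descFactorial_eq_zero_iff_lt.mpr (by omega)]
      norm_num
  · rfl


section Main
variable (Λ : Finset ℕ) (a : ℕ → PowerSeries ℂ) (m : ℤ) (d M : ℕ)

lemma split_key (hα : ∀ j ∈ Λ, m ≤ (ordz (a j) : ℤ) - j)
    (hdM : (M : ℤ) - d = m) (u : PowerSeries ℂ) (n : ℕ) (hn : d ≤ n) :
    PowerSeries.coeff (n - d + M) (Pop Λ a u) =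
      W Λ a m n * PowerSeries.coeff n u +
        ∑ n' ∈ Finset.range n, cmat Λ a (n - d + M) n' * PowerSeries.coeff n' u := by
  have htn : ((n - d + M : ℕ) : ℤ) = n + m := by omega
  rw [coeff_Pop_key Λ a m hα u _ n htn, Finset.sum_range_succ,
    cmat_diag Λ a m hα _ n htn]
  ring

lemma ker_unique (hα : ∀ j ∈ Λ, m ≤ (ordz (a j) : ℤ) - j)
    (hdM : (M : ℤ) - d = m) (hW : ∀ n : ℕ, d ≤ n → W Λ a m n ≠ 0)
    (u : PowerSeries ℂ) (hu : Pop Λ a u = 0) (h0 : ∀ k < d, PowerSeries.coeff k u = 0) :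
    u = 0 := by
  ext n
  simp only [map_zero]
  induction n using Nat.strong_induction_on with
  | _ n ih =>
    by_cases hn : n < d
    · exact h0 n hn
    · push_neg at hn
      have key := split_key Λ a m d M hα hdM u n hn
      rw [hu, map_zero] at key
      have hsum : ∑ n' ∈ Finset.range n, cmat Λ a (n - d + M) n' * PowerSeries.coeff n' u = 0 :=
        Finset.sum_eq_zero fun n' hn' => by
          rw [ih n' (Finset.mem_range.mp hn'), mul_zero]
      rw [hsum, add_zero] at key
      exact (mul_eq_zero.mp key.symm).resolve_left (hW n hn)

/-- The solver: given targets `τ` (desired coefficient of `P u` at degree `n - d + M` for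
`n ≥ d`) and initial data `w`, construct `u`. -/
noncomputable def solSeries (τ w : ℕ → ℂ) : PowerSeries ℂ :=
  PowerSeries.mk (solve (fun n prev =>
    if n < d then w n
    else (τ n - ∑ n' ∈ Finset.range n, cmat Λ a (n - d + M) n' * prev n') / W Λ a m n))

lemma solSeries_coeff_low (τ w : ℕ → ℂ) (k : ℕ) (hk : k < d) :
    PowerSeries.coeff k (solSeries Λ a m d M τ w) = w k := by
  rw [solSeries, PowerSeries.coeff_mk, solve_eq, if_pos hk]

lemma solSeries_spec (hα : ∀ j ∈ Λ, m ≤ (ordz (a j) : ℤ) - j)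
    (hdM : (M : ℤ) - d = m) (hW : ∀ n : ℕ, d ≤ n → W Λ a m n ≠ 0)
    (τ w : ℕ → ℂ) (n : ℕ) (hn : d ≤ n) :
    PowerSeries.coeff (n - d + M) (Pop Λ a (solSeries Λ a m d M τ w)) = τ n := by
  set u := solSeries Λ a m d M τ w with hu
  have key := split_key Λ a m d M hα hdM u n hn
  have hcoeff : PowerSeries.coeff n u =
      (τ n - ∑ n' ∈ Finset.range n, cmat Λ a (n - d + M) n' * PowerSeries.coeff n' u) /
        W Λ a m n := by
    rw [hu, solSeries, PowerSeries.coeff_mk, solve_eq, if_neg (by omega)]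
    congr 2
    refine Finset.sum_congr rfl fun n' hn' => ?_
    simp only [dif_pos (Finset.mem_range.mp hn'), PowerSeries.coeff_mk]
  rw [key, hcoeff]
  rw [mul_div_cancel₀ _ (hW n hn)]
  ring
end Main


/-- Index formula from the proof of Theorem 1: if `W_m(n) ≠ 0` for every `n ∈ ℕ₀` with
`n ≥ −m`, then `dim ker P(∂_z) = max(−m,0)`, `dim coker P(∂_z) = max(m,0)`, and the index
`χ(P(∂_z),ℂ[[z]]) = dim ker − dim coker` equals `−m`. -/
theorem statement3 (Λ : Finset ℕ) (hΛ : Λ.Nonempty) (a : ℕ → PowerSeries ℂ)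
    (ha : ∀ j ∈ Λ, a j ≠ 0)
    (m : ℤ) (hm : m = Λ.inf' hΛ (fun j => (ordz (a j) : ℤ) - j))
    (hW : ∀ n : ℕ, -m ≤ (n : ℤ) → W Λ a m n ≠ 0) :
    FiniteDimensional ℂ (LinearMap.ker (Pop Λ a)) ∧
    FiniteDimensional ℂ (PowerSeries ℂ ⧸ LinearMap.range (Pop Λ a)) ∧
    (Module.finrank ℂ (LinearMap.ker (Pop Λ a)) : ℤ) = max (-m) 0 ∧
    (Module.finrank ℂ (PowerSeries ℂ ⧸ LinearMap.range (Pop Λ a)) : ℤ) = max m 0 ∧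
    (Module.finrank ℂ (LinearMap.ker (Pop Λ a)) : ℤ)
      - (Module.finrank ℂ (PowerSeries ℂ ⧸ LinearMap.range (Pop Λ a)) : ℤ) = -m := by
  have hα : ∀ j ∈ Λ, m ≤ (ordz (a j) : ℤ) - j := fun j hj => hm ▸ Finset.inf'_le _ hj
  set d : ℕ := (-m).toNat with hd
  set M : ℕ := m.toNat with hM
  have hdM : (M : ℤ) - d = m := by omega
  have hd0 : d = 0 ∨ M = 0 := by omega
  have hW' : ∀ n : ℕ, d ≤ n → W Λ a m n ≠ 0 := fun n hn => hW n (by omega)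
  -- the truncation maps
  set φ : PowerSeries ℂ →ₗ[ℂ] (Fin M → ℂ) :=
    LinearMap.pi (fun i : Fin M => PowerSeries.coeff (i : ℕ)) with hφ
  set ψ : LinearMap.ker (Pop Λ a) →ₗ[ℂ] (Fin d → ℂ) :=
    (LinearMap.pi (fun i : Fin d => PowerSeries.coeff (i : ℕ))).comp
      (LinearMap.ker (Pop Λ a)).subtype with hψ
  -- range = ker φ
  have hrange : LinearMap.range (Pop Λ a) = LinearMap.ker φ := by
    ext v
    constructor
    · rintro ⟨u, rfl⟩
      rw [LinearMap.mem_ker]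
      funext i
      have hi : (i : ℤ) < m := by have := i.isLt; omega
      simpa [hφ] using coeff_Pop_small Λ a m hα u i hi
    · intro hv
      have hv' : ∀ i : Fin M, PowerSeries.coeff (i : ℕ) v = 0 := by
        intro i
        have := LinearMap.mem_ker.mp hv
        simpa [hφ] using congrFun this i
      refine ⟨solSeries Λ a m d M (fun n => PowerSeries.coeff (n - d + M) v) 0, ?_⟩
      ext t
      by_cases ht : t < M
      · rw [coeff_Pop_small Λ a m hα _ t (by omega), hv' ⟨t, ht⟩]
      · have hn : d ≤ t - M + d := by omega
        have h2 : t - M + d - d + M = t := by omega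
        have := solSeries_spec Λ a m d M hα hdM hW'
          (fun n => PowerSeries.coeff (n - d + M) v) 0 (t - M + d) hn
        simpa only [h2] using this
  -- φ surjective
  have hφs : Function.Surjective φ := by
    intro w
    refine ⟨PowerSeries.mk (fun n => if h : n < M then w ⟨n, h⟩ else 0), ?_⟩
    funext i
    simp [hφ, PowerSeries.coeff_mk, i.isLt]
  -- ψ bijective
  have hψinj : Function.Injective ψ := by
    rw [← LinearMap.ker_eq_bot]
    rw [eq_bot_iff]
    intro x hx
    have hx' : ∀ k < d, PowerSeries.coeff k x.1 = 0 := by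
      intro k hk
      have := LinearMap.mem_ker.mp hx
      simpa [hψ] using congrFun this ⟨k, hk⟩
    have : x.1 = 0 := ker_unique Λ a m d M hα hdM hW' x.1 x.2 hx'
    simpa using Subtype.ext this
  have hψs : Function.Surjective ψ := by
    intro w
    set u := solSeries Λ a m d M 0 (fun k => if h : k < d then w ⟨k, h⟩ else 0) with hu
    have hu0 : Pop Λ a u = 0 := by
      ext t
      by_cases ht : t < M
      · simpa using coeff_Pop_small Λ a m hα u t (by omega)
      · have hn : d ≤ t - M + d := by omega
        have h2 : t - M + d - d + M = t := by omega
        have := solSeries_spec Λ a m d M hα hdM hW' 0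
          (fun k => if h : k < d then w ⟨k, h⟩ else 0) (t - M + d) hn
        simpa only [h2, Pi.zero_apply, map_zero] using this
    refine ⟨⟨u, hu0⟩, ?_⟩
    funext i
    have := solSeries_coeff_low Λ a m d M 0 (fun k => if h : k < d then w ⟨k, h⟩ else 0) i i.isLt
    simp only [hψ, LinearMap.comp_apply, LinearMap.pi_apply, Submodule.subtype_apply]
    rw [this]
    simp [i.isLt]
  -- equivalences
  have e1 : LinearMap.ker (Pop Λ a) ≃ₗ[ℂ] (Fin d → ℂ) :=
    LinearEquiv.ofBijective ψ ⟨hψinj, hψs⟩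
  have e2 : (PowerSeries ℂ ⧸ LinearMap.range (Pop Λ a)) ≃ₗ[ℂ] (Fin M → ℂ) :=
    (Submodule.quotEquivOfEq _ _ hrange).trans (φ.quotKerEquivOfSurjective hφs)
  have f1 : FiniteDimensional ℂ (LinearMap.ker (Pop Λ a)) := Module.Finite.equiv e1.symm
  have f2 : FiniteDimensional ℂ (PowerSeries ℂ ⧸ LinearMap.range (Pop Λ a)) :=
    Module.Finite.equiv e2.symm
  have r1 : Module.finrank ℂ (LinearMap.ker (Pop Λ a)) = d := by
    rw [e1.finrank_eq, Module.finrank_fin_fun]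
  have r2 : Module.finrank ℂ (PowerSeries ℂ ⧸ LinearMap.range (Pop Λ a)) = M := by
    rw [e2.finrank_eq, Module.finrank_fin_fun]
  refine ⟨f1, f2, ?_, ?_, ?_⟩ <;> simp only [r1, r2] <;> omega
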